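/- arXiv:1909.07492 — 5 statements merged into one kernel-verified Lean document; each statement's English description precedes it below -/
import Mathlib

section
/- Let g : ℝⁿ → ℝⁿ be locally Lipschitz, f a C¹ Lyapunov function (∇fᵀg ≤ 0 everywhere), K a compact set invariant under the flow φ of ẋ = g(x) (with φ defined on ℝ₊ × K). Suppose there exist ε > 0 with f* := min_K f, such that λ := −max_{x∈K, f(x) ≥ f*+ε} ∇f(x)ᵀg(x) > 0. Then for T = (max_K f − f*)/λ and all t ≥ T and all x ∈ K, f(φᵗ(x)) − f* ≤ ε. -/
/-- uniform convergence in value to the minimum on a compact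
invariant set for a flow of `ẋ = g(x)` with Lyapunov function `f`.  With
`f* = min_K f`, if `∇fᵀg ≤ −λ < 0` on `{x ∈ K : f x ≥ f* + ε}`, then for
`T = (max_K f − f*)/λ` and all `t ≥ T`, `x ∈ K`, `f(φᵗ(x)) − f* ≤ ε`. -/
theorem stmt5 (n : ℕ)
    (g : EuclideanSpace ℝ (Fin n) → EuclideanSpace ℝ (Fin n))
    (f : EuclideanSpace ℝ (Fin n) → ℝ) (hf : ContDiff ℝ 1 f)
    (hLyap : ∀ y, fderiv ℝ f y (g y) ≤ 0)
    (K : Set (EuclideanSpace ℝ (Fin n))) (hK : IsCompact K) (hKne : K.Nonempty)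
    (φ : ℝ → EuclideanSpace ℝ (Fin n) → EuclideanSpace ℝ (Fin n))
    (hφ0 : ∀ x ∈ K, φ 0 x = x)
    (hinv : ∀ t ≥ (0:ℝ), ∀ x ∈ K, φ t x ∈ K)
    (hflow : ∀ x ∈ K, ∀ t ≥ (0:ℝ), HasDerivAt (fun s => φ s x) (g (φ t x)) t)
    (ε lam : ℝ) (hε : 0 < ε) (hlam : 0 < lam)
    (hrate : ∀ x ∈ K, sInf (f '' K) + ε ≤ f x → fderiv ℝ f x (g x) ≤ -lam) :
    ∀ t ≥ (sSup (f '' K) - sInf (f '' K)) / lam, ∀ x ∈ K,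
      f (φ t x) - sInf (f '' K) ≤ ε := by
  set m := sInf (f '' K) with hm
  set M := sSup (f '' K) with hM
  have hfc : Continuous f := hf.continuous
  have himg : IsCompact (f '' K) := hK.image hfc
  have himgne : (f '' K).Nonempty := hKne.image f
  have hbdd : BddBelow (f '' K) := himg.bddBelow
  have hbddA : BddAbove (f '' K) := himg.bddAbove
  have hmem : ∀ y ∈ K, m ≤ f y ∧ f y ≤ M := by
    intro y hy
    exact ⟨csInf_le hbdd ⟨y, hy, rfl⟩, le_csSup hbddA ⟨y, hy, rfl⟩⟩
  have hmM : m ≤ M := by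
    obtain ⟨y, hy⟩ := hKne
    exact (hmem y hy).1.trans (hmem y hy).2
  intro t ht x hx
  have hT0 : (0:ℝ) ≤ (M - m) / lam := div_nonneg (by linarith) hlam.le
  have ht0 : (0:ℝ) ≤ t := le_trans hT0 ht
  -- the function F s = f (φ s x)
  set F : ℝ → ℝ := fun s => f (φ s x) with hF
  have hFd : ∀ s ≥ (0:ℝ), HasDerivAt F (fderiv ℝ f (φ s x) (g (φ s x))) s := by
    intro s hs
    exact ((hf.differentiable one_ne_zero (φ s x)).hasFDerivAt).comp_hasDerivAt s
      (hflow x hx s hs)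
  have hFcont : ContinuousOn F (Set.Ici 0) := fun s hs =>
    (hFd s hs).continuousAt.continuousWithinAt
  have hFdiff : DifferentiableOn ℝ F (interior (Set.Ici (0:ℝ))) := by
    rw [interior_Ici]
    exact fun s hs => ((hFd s (le_of_lt hs)).differentiableAt).differentiableWithinAt
  have hanti : AntitoneOn F (Set.Ici 0) := by
    apply antitoneOn_of_deriv_nonpos (convex_Ici 0) hFcont hFdiff
    intro s hs
    rw [interior_Ici] at hs
    rw [(hFd s hs.le).deriv]
    exact hLyap (φ s x)
  by_contra hcon
  push_neg at hcon
  have hFt : m + ε < F t := by linarith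
  -- on [0, t], deriv F ≤ -lam
  have hbound : ∀ s ∈ interior (Set.Icc (0:ℝ) t), deriv F s ≤ -lam := by
    intro s hs
    have hs' : s ∈ Set.Ioo (0:ℝ) t := by rwa [interior_Icc] at hs
    have hsge : (0:ℝ) ≤ s := hs'.1.le
    rw [(hFd s hsge).deriv]
    apply hrate (φ s x) (hinv s hsge x hx)
    have : F t ≤ F s := hanti hsge (Set.mem_Ici.mpr ht0) hs'.2.le
    linarith
  have hmv : F t - F 0 ≤ -lam * (t - 0) := by
    apply Convex.image_sub_le_mul_sub_of_deriv_le (convex_Icc 0 t)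
      (hFcont.mono (Set.Icc_subset_Ici_self))
      (hFdiff.mono (by rw [interior_Icc, interior_Ici]; exact fun s hs => hs.1))
      hbound 0 (Set.left_mem_Icc.mpr ht0) t (Set.right_mem_Icc.mpr ht0) ht0
  have hF0 : F 0 = f x := by simp [hF, hφ0 x hx]
  have hfxM : f x ≤ M := (hmem x hx).2
  have hlamt : M - m ≤ lam * t := by
    rw [ge_iff_le, div_le_iff₀ hlam] at ht
    linarith [mul_comm lam t]
  have : F t ≤ m := by
    rw [hF0] at hmv
    nlinarith
  linarith
end

section
/- Let A, B be metric spaces, V an open subset of A × B, and φ : A ⇉ B a lower hemicontinuous correspondence. Then the correspondence ψ : a ↦ {b ∈ B : (a,b) ∈ V and b ∈ φ(a)} is lower hemicontinuous. -/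
/-- A correspondence `φ : A ⇉ B` is lower hemicontinuous if whenever `φ a₀` meets
an open set `V`, so does `φ a` for all `a` in a neighbourhood of `a₀`. -/
def LowerHemicontinuousCorr {A B : Type*} [TopologicalSpace A] [TopologicalSpace B]
    (φ : A → Set B) : Prop :=
  ∀ a₀ : A, ∀ V : Set B, IsOpen V → (φ a₀ ∩ V).Nonempty →
    ∃ I : Set A, IsOpen I ∧ a₀ ∈ I ∧ ∀ a ∈ I, (φ a ∩ V).Nonempty

/-- if `V ⊆ A × B` is open and `φ` is lower hemicontinuous, then
`a ↦ sV(a) ∩ φ(a) = {b | (a,b) ∈ V ∧ b ∈ φ a}` is lower hemicontinuous. -/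
theorem stmt7 {A B : Type*} [MetricSpace A] [MetricSpace B]
    (V : Set (A × B)) (hV : IsOpen V) (φ : A → Set B) (hφ : LowerHemicontinuousCorr φ) :
    LowerHemicontinuousCorr (fun a => {b | (a, b) ∈ V ∧ b ∈ φ a}) := by
  intro a₀ W hW ⟨b, ⟨hbV, hbφ⟩, hbW⟩
  obtain ⟨U, U', hU, hU', haU, hbU', hUV⟩ := isOpen_prod_iff.1 hV a₀ b hbV
  obtain ⟨I, hI, haI, hIn⟩ := hφ a₀ (W ∩ U') (hW.inter hU') ⟨b, hbφ, hbW, hbU'⟩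
  refine ⟨I ∩ U, hI.inter hU, ⟨haI, haU⟩, ?_⟩
  rintro a ⟨haI', haU'⟩
  obtain ⟨b', hb'φ, hb'W, hb'U'⟩ := hIn a haI'
  exact ⟨b', ⟨hUV ⟨haU', hb'U'⟩, hb'φ⟩, hb'W⟩
end

section
/- Let h : U × ℝⁿ → ℝᵐ be continuously differentiable, U ⊆ ℝᵖ open, such that at every zero (u,x) of h the partial differential of h with respect to x is surjective. Then the correspondence M : u ↦ {x ∈ ℝⁿ : h(u,x) = 0} is lower hemicontinuous on U. -/
/-- if `h : U × ℝⁿ → ℝᵐ` is C¹ and at every zero the partial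
differential in `x` is surjective, then `u ↦ {x | h u x = 0}` is lower
hemicontinuous on `U`. -/
theorem stmt9 (p n m : ℕ) (U : Set (EuclideanSpace ℝ (Fin p))) (hU : IsOpen U)
    (h : EuclideanSpace ℝ (Fin p) → EuclideanSpace ℝ (Fin n) → EuclideanSpace ℝ (Fin m))
    (hsm : ContDiffOn ℝ 1
      (fun q : EuclideanSpace ℝ (Fin p) × EuclideanSpace ℝ (Fin n) => h q.1 q.2)
      (U ×ˢ Set.univ))
    (hreg : ∀ u ∈ U, ∀ x : EuclideanSpace ℝ (Fin n), h u x = 0 →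
      Function.Surjective (fderiv ℝ (h u) x))
    (u₀ : EuclideanSpace ℝ (Fin p)) (hu₀ : u₀ ∈ U)
    (V : Set (EuclideanSpace ℝ (Fin n))) (hV : IsOpen V)
    (hne : ({x | h u₀ x = 0} ∩ V).Nonempty) :
    ∃ W : Set (EuclideanSpace ℝ (Fin p)), IsOpen W ∧ u₀ ∈ W ∧ W ⊆ U ∧
      ∀ u ∈ W, ({x | h u x = 0} ∩ V).Nonempty := by
  obtain ⟨x₀, hx₀0, hx₀V⟩ := hne
  have hx₀0' : h u₀ x₀ = 0 := hx₀0
  let E := EuclideanSpace ℝ (Fin p)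
  let X := EuclideanSpace ℝ (Fin n)
  let Y := EuclideanSpace ℝ (Fin m)
  let g : E × X → Y := fun q => h q.1 q.2
  have hopen : IsOpen (U ×ˢ (Set.univ : Set X)) := hU.prod isOpen_univ
  have hmem : ((u₀, x₀) : E × X) ∈ U ×ˢ (Set.univ : Set X) := ⟨hu₀, trivial⟩
  have hgc : ContDiffAt ℝ 1 g (u₀, x₀) := hsm.contDiffAt (hopen.mem_nhds hmem)
  set g' := fderiv ℝ g (u₀, x₀) with hg'
  have hgd : HasStrictFDerivAt g g' (u₀, x₀) := hgc.hasStrictFDerivAt one_ne_zero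
  let F : E × X → E × Y := fun q => (q.1, g q)
  let F' : (E × X) →L[ℝ] E × Y := (ContinuousLinearMap.fst ℝ E X).prod g'
  have hFd : HasStrictFDerivAt F F' (u₀, x₀) := HasStrictFDerivAt.prodMk hasStrictFDerivAt_fst hgd
  -- partial derivative in x
  let j : X →L[ℝ] E × X := ContinuousLinearMap.inr ℝ E X
  have hpart : HasFDerivAt (h u₀) (g'.comp j) x₀ := by
    have hjx : HasFDerivAt (fun x : X => ((u₀ : E), x)) j x₀ :=
      HasFDerivAt.prodMk (hasFDerivAt_const u₀ x₀) (hasFDerivAt_id x₀)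
    exact hgd.hasFDerivAt.comp x₀ hjx
  have hsurj : Function.Surjective (g'.comp j) := by
    have := hreg u₀ hu₀ x₀ hx₀0'
    rwa [hpart.fderiv] at this
  have hFsurj : Function.Surjective F' := by
    rintro ⟨a, b⟩
    obtain ⟨dx, hdx⟩ := hsurj (b - g' (a, 0))
    refine ⟨(a, dx), ?_⟩
    have hb : g' (a, dx) = b := by
      have hsplit : ((a, dx) : E × X) = (a, (0 : X)) + ((0 : E), dx) := by simp
      rw [hsplit, map_add]
      have h2 : g' ((0 : E), dx) = b - g' (a, 0) := hdx
      rw [h2]; abel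
    simp only [F', ContinuousLinearMap.prod_apply, ContinuousLinearMap.coe_fst', hb]
  have hmap : Filter.map F (nhds (u₀, x₀)) = nhds (F (u₀, x₀)) :=
    hFd.map_nhds_eq_of_surj (LinearMap.range_eq_top.mpr hFsurj)
  have hF0 : F (u₀, x₀) = ((u₀ : E), (0 : Y)) := by simp [F, g, hx₀0']
  have himg : F '' (U ×ˢ V) ∈ nhds ((u₀ : E), (0 : Y)) := by
    rw [← hF0, ← hmap]
    exact Filter.image_mem_map (prod_mem_nhds (hU.mem_nhds hu₀) (hV.mem_nhds hx₀V))
  obtain ⟨T, hTsub, hTopen, hT0⟩ := mem_nhds_iff.mp himg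
  refine ⟨U ∩ ((fun u : E => (u, (0 : Y))) ⁻¹' T), ?_, ⟨hu₀, hT0⟩, Set.inter_subset_left, ?_⟩
  · exact hU.inter (hTopen.preimage (continuous_id.prodMk continuous_const))
  · rintro u ⟨huU, huT⟩
    obtain ⟨⟨u', x⟩, ⟨hu'U, hxV⟩, heq⟩ := hTsub huT
    have h1 : u' = u := congrArg Prod.fst heq
    have h2 : h u' x = 0 := congrArg Prod.snd heq
    subst h1
    exact ⟨x, h2, hxV⟩
end

section
/- Let f : U → ℝ be C¹ on U ⊆ ℝⁿ open, and consider the flow of ẋ = −P(x)∇f(x) where P(x) is the orthogonal projection onto ker J(x) for a C¹ full-row-rank matrix field J. If x* is a strict constrained local minimum of f on {h = 0} (with J the Jacobian of h and h conserved by the flow), isolated in the set of constrained critical points, then x* is asymptotically stable: there is a neighbourhood V' of x* such that every solution starting in V' ∩ {h = 0} converges to x* as t → ∞. -/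
open Filter Set Metric ContinuousLinearMap
open scoped InnerProductSpace RealInnerProductSpace

variable {E F : Type*} [NormedAddCommGroup E] [InnerProductSpace ℝ E] [FiniteDimensional ℝ E]
  [NormedAddCommGroup F] [InnerProductSpace ℝ F] [FiniteDimensional ℝ F]

lemma my_proj_eq (K : Submodule ℝ E) (Pm : E →L[ℝ] E)
    (hP1 : ∀ v ∈ K, Pm v = v) (hP2 : ∀ v ∈ Kᗮ, Pm v = 0) (v : E) :
    Pm v = (K.orthogonalProjectionOnto v : E) := by
  have h1 : (K.orthogonalProjectionOnto v : E) ∈ K := (K.orthogonalProjectionOnto v).2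
  have h2 : v - (K.orthogonalProjectionOnto v : E) ∈ Kᗮ := Submodule.sub_starProjection_mem_orthogonal (K := K) v
  have e : Pm v = Pm (K.orthogonalProjectionOnto v : E) + Pm (v - K.orthogonalProjectionOnto v) := by
    rw [← map_add]; congr 1; abel
  rw [e, hP1 _ h1, hP2 _ h2, add_zero]

lemma my_unit (A : E →L[ℝ] F) (hA : Function.Surjective A) :
    IsUnit (A ∘L (ContinuousLinearMap.adjoint A)) := by
  rw [ContinuousLinearMap.isUnit_iff_bijective]
  have key : ∀ w : F, A ((ContinuousLinearMap.adjoint A) w) = 0 → w = 0 := by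
    intro w hw
    have h1 : (ContinuousLinearMap.adjoint A) w = 0 := by
      have h2 : ⟪(ContinuousLinearMap.adjoint A) w, (ContinuousLinearMap.adjoint A) w⟫_ℝ = 0 := by
        rw [ContinuousLinearMap.adjoint_inner_left, hw, inner_zero_right]
      exact inner_self_eq_zero.mp h2
    obtain ⟨v, hv⟩ := hA w
    have h3 : ⟪w, w⟫_ℝ = 0 := by
      calc ⟪w, w⟫_ℝ = ⟪w, A v⟫_ℝ := by rw [hv]
        _ = ⟪(ContinuousLinearMap.adjoint A) w, v⟫_ℝ :=
            (ContinuousLinearMap.adjoint_inner_left A v w).symm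
        _ = 0 := by rw [h1, inner_zero_left]
    exact inner_self_eq_zero.mp h3
  have hinj : Function.Injective (A ∘L (ContinuousLinearMap.adjoint A)) := by
    intro w w' hww
    have h4 := key (w - w') (by
      simp only [ContinuousLinearMap.comp_apply] at hww
      rw [map_sub, map_sub, hww, sub_self])
    exact sub_eq_zero.mp h4
  exact ⟨hinj, (LinearMap.injective_iff_surjective
    (f := ((A ∘L (ContinuousLinearMap.adjoint A) : F →L[ℝ] F) : F →ₗ[ℝ] F))).mp hinj⟩

lemma my_formula (A : E →L[ℝ] F) (hA : Function.Surjective A)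
    (Pm : E →L[ℝ] E) (hP1 : ∀ v ∈ LinearMap.ker (A : E →ₗ[ℝ] F), Pm v = v)
    (hP2 : ∀ v ∈ (LinearMap.ker (A : E →ₗ[ℝ] F))ᗮ, Pm v = 0) (v : E) :
    Pm v = v - (ContinuousLinearMap.adjoint A)
      ((Ring.inverse (A ∘L ContinuousLinearMap.adjoint A)) (A v)) := by
  set B := A ∘L ContinuousLinearMap.adjoint A with hB
  set u := v - (ContinuousLinearMap.adjoint A) ((Ring.inverse B) (A v)) with hu
  have hBu : IsUnit B := my_unit A hA
  have hKu : u ∈ LinearMap.ker (A : E →ₗ[ℝ] F) := by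
    have h5 : B * Ring.inverse B = 1 := Ring.mul_inverse_cancel _ hBu
    have h6 := congrArg (fun T : F →L[ℝ] F => T (A v)) h5
    simp only [ContinuousLinearMap.mul_apply, ContinuousLinearMap.one_apply, hB,
      ContinuousLinearMap.comp_apply] at h6
    rw [LinearMap.mem_ker]
    show A u = 0
    rw [hu, map_sub, h6, sub_self]
  have hperp : v - u ∈ (LinearMap.ker (A : E →ₗ[ℝ] F))ᗮ := by
    rw [Submodule.mem_orthogonal]
    intro k hk
    have hk0 : A k = 0 := hk
    have : v - u = (ContinuousLinearMap.adjoint A) ((Ring.inverse B) (A v)) := by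
      rw [hu]; abel
    rw [this, ContinuousLinearMap.adjoint_inner_right, hk0, inner_zero_left]
  have : ((LinearMap.ker (A : E →ₗ[ℝ] F)).orthogonalProjectionOnto v : E) = u :=
    Submodule.eq_starProjection_of_mem_orthogonal (K := LinearMap.ker (A : E →ₗ[ℝ] F))
    (u := v) (v := u) hKu hperp
  rw [my_proj_eq (LinearMap.ker (A : E →ₗ[ℝ] F)) Pm hP1 hP2 v, this]

lemma my_cont {U : Set E} (hU : IsOpen U) (h : E → F) (hh : ContDiff ℝ 1 h)
    (hsurj : ∀ y ∈ U, Function.Surjective (fderiv ℝ h y))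
    (Pm : E → E →L[ℝ] E)
    (hP1 : ∀ y, ∀ v ∈ LinearMap.ker (fderiv ℝ h y : E →ₗ[ℝ] F), Pm y v = v)
    (hP2 : ∀ y, ∀ v ∈ (LinearMap.ker (fderiv ℝ h y : E →ₗ[ℝ] F))ᗮ, Pm y v = 0)
    (g : E → E) (hg : ContinuousOn g U) :
    ContinuousOn (fun z => Pm z (g z)) U := by
  have hA : Continuous (fun z => fderiv ℝ h z) := hh.continuous_fderiv one_ne_zero
  have hAd : Continuous (fun z => ContinuousLinearMap.adjoint (fderiv ℝ h z)) :=
    (ContinuousLinearMap.adjoint : (E →L[ℝ] F) ≃ₗᵢ⋆[ℝ] (F →L[ℝ] E)).continuous.comp hA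
  have hBc : Continuous (fun z => (fderiv ℝ h z) ∘L ContinuousLinearMap.adjoint (fderiv ℝ h z)) :=
    hA.clm_comp hAd
  have hInv : ContinuousOn
      (fun z => Ring.inverse ((fderiv ℝ h z) ∘L ContinuousLinearMap.adjoint (fderiv ℝ h z))) U := by
    intro z hz
    have hu := my_unit (fderiv ℝ h z) (hsurj z hz)
    have h1 : ContinuousAt Ring.inverse
        ((fderiv ℝ h z) ∘L ContinuousLinearMap.adjoint (fderiv ℝ h z)) := by
      rw [← hu.unit_spec]
      exact NormedRing.inverse_continuousAt hu.unit
    exact (ContinuousAt.comp (x := z) h1 hBc.continuousAt).continuousWithinAt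
  have big : ContinuousOn (fun z => g z - (ContinuousLinearMap.adjoint (fderiv ℝ h z))
      ((Ring.inverse ((fderiv ℝ h z) ∘L ContinuousLinearMap.adjoint (fderiv ℝ h z)))
        ((fderiv ℝ h z) (g z)))) U :=
    hg.sub (hAd.continuousOn.clm_apply (hInv.clm_apply (hA.continuousOn.clm_apply hg)))
  exact big.congr (fun z hz =>
    my_formula (fderiv ℝ h z) (hsurj z hz) (Pm z) (hP1 z) (hP2 z) (g z))

lemma my_inner_proj (K : Submodule ℝ E) (Pm : E →L[ℝ] E)
    (hP1 : ∀ v ∈ K, Pm v = v) (hP2 : ∀ v ∈ Kᗮ, Pm v = 0) (v : E) :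
    ⟪v, Pm v⟫_ℝ = ‖Pm v‖ ^ 2 := by
  rw [my_proj_eq K Pm hP1 hP2 v]
  set a : E := (K.orthogonalProjectionOnto v : E) with ha
  have h0 : ⟪v - a, a⟫_ℝ = 0 :=
    Submodule.starProjection_inner_eq_zero v a (K.orthogonalProjectionOnto v).2
  have h1 : ⟪v, a⟫_ℝ - ⟪a, a⟫_ℝ = 0 := by rw [← inner_sub_left]; exact h0
  rw [← real_inner_self_eq_norm_sq]
  linarith

lemma my_zero_iff (K : Submodule ℝ E) (Pm : E →L[ℝ] E)
    (hP1 : ∀ v ∈ K, Pm v = v) (hP2 : ∀ v ∈ Kᗮ, Pm v = 0) (v : E) :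
    Pm v = 0 ↔ v ∈ Kᗮ := by
  rw [my_proj_eq K Pm hP1 hP2 v]
  rw [ZeroMemClass.coe_eq_zero, Submodule.orthogonalProjectionOnto_eq_zero_iff]

lemma my_mem (K : Submodule ℝ E) (Pm : E →L[ℝ] E)
    (hP1 : ∀ v ∈ K, Pm v = v) (hP2 : ∀ v ∈ Kᗮ, Pm v = 0) (v : E) :
    Pm v ∈ K := by
  rw [my_proj_eq K Pm hP1 hP2 v]; exact (K.orthogonalProjectionOnto v).2

lemma my_norm_le (K : Submodule ℝ E) (Pm : E →L[ℝ] E)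
    (hP1 : ∀ v ∈ K, Pm v = v) (hP2 : ∀ v ∈ Kᗮ, Pm v = 0) (v : E) :
    ‖Pm v‖ ≤ ‖v‖ := by
  rw [my_proj_eq K Pm hP1 hP2 v]
  calc ‖(K.orthogonalProjectionOnto v : E)‖ = ‖K.orthogonalProjectionOnto v‖ := rfl
    _ ≤ ‖K.orthogonalProjectionOnto‖ * ‖v‖ := (K.orthogonalProjectionOnto).le_opNorm v
    _ ≤ 1 * ‖v‖ := by
        exact mul_le_mul_of_nonneg_right (Submodule.orthogonalProjectionOnto_norm_le K) (norm_nonneg v)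
    _ = ‖v‖ := one_mul _

set_option maxHeartbeats 1000000 in
/-- for the flow of `ẋ = −P(x)∇f(x)` (projected gradient flow with
`P(y)` the orthogonal projection onto `ker Dh(y)`), a strict constrained local
minimum `x*` of `f` on `{h = 0}`, isolated in the set of constrained critical
points, is asymptotically stable: some neighbourhood `V'` of `x*` is such that
every solution starting in `V' ∩ {h = 0}` converges to `x*`. -/
theorem stmt16 (n m : ℕ) (U : Set (EuclideanSpace ℝ (Fin n))) (hU : IsOpen U)
    (f : EuclideanSpace ℝ (Fin n) → ℝ) (hf : ContDiffOn ℝ 1 f U)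
    (h : EuclideanSpace ℝ (Fin n) → EuclideanSpace ℝ (Fin m)) (hh : ContDiff ℝ 1 h)
    (hsurj : ∀ y ∈ U, Function.Surjective (fderiv ℝ h y))
    (P : EuclideanSpace ℝ (Fin n) →
      EuclideanSpace ℝ (Fin n) →L[ℝ] EuclideanSpace ℝ (Fin n))
    (hP1 : ∀ y, ∀ v ∈ LinearMap.ker
      (fderiv ℝ h y : EuclideanSpace ℝ (Fin n) →ₗ[ℝ] EuclideanSpace ℝ (Fin m)), P y v = v)
    (hP2 : ∀ y, ∀ v ∈ (LinearMap.ker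
      (fderiv ℝ h y : EuclideanSpace ℝ (Fin n) →ₗ[ℝ] EuclideanSpace ℝ (Fin m)))ᗮ, P y v = 0)
    (φ : ℝ → EuclideanSpace ℝ (Fin n) → EuclideanSpace ℝ (Fin n))
    (hφ0 : ∀ x ∈ U, φ 0 x = x)
    (hφ : ∀ x ∈ U, ∀ t ≥ (0:ℝ), φ t x ∈ U ∧
      HasDerivAt (fun s => φ s x) (-(P (φ t x)) (gradient f (φ t x))) t)
    (xstar : EuclideanSpace ℝ (Fin n)) (hxU : xstar ∈ U) (hfeas : h xstar = 0)
    (hstrict : ∃ V, IsOpen V ∧ xstar ∈ V ∧ V ⊆ U ∧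
      ∀ x ∈ V, h x = 0 → x ≠ xstar → f xstar < f x)
    (hiso : ∃ V₂, IsOpen V₂ ∧ xstar ∈ V₂ ∧ V₂ ⊆ U ∧
      ∀ x ∈ V₂, h x = 0 →
        gradient f x ∈ (LinearMap.ker
            (fderiv ℝ h x : EuclideanSpace ℝ (Fin n) →ₗ[ℝ] EuclideanSpace ℝ (Fin m)))ᗮ → x = xstar) :
    ∃ V' : Set (EuclideanSpace ℝ (Fin n)), IsOpen V' ∧ xstar ∈ V' ∧
      ∀ x₀ ∈ V', h x₀ = 0 →
        Filter.Tendsto (fun t => φ t x₀) Filter.atTop (nhds xstar) := by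
  obtain ⟨V, hVopen, hxV, hVU, hVmin⟩ := hstrict
  obtain ⟨V₂, hV2open, hxV2, hV2U, hV2iso⟩ := hiso
  set G : EuclideanSpace ℝ (Fin n) → EuclideanSpace ℝ (Fin n) := fun z => P z (gradient f z) with hGdef
  -- continuity of the gradient
  have hgradcont : ContinuousOn (fun z => gradient f z) U := by
    have h1 : ContinuousOn (fderiv ℝ f) U := hf.continuousOn_fderiv_of_isOpen hU le_rfl
    exact (InnerProductSpace.toDual ℝ (EuclideanSpace ℝ (Fin n))).symm.continuous.comp_continuousOn h1
  have hG : ContinuousOn G U := my_cont hU h hh hsurj P hP1 hP2 _ hgradcont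
  have hdiff : ∀ z ∈ U, DifferentiableAt ℝ f z := fun z hz =>
    (hf.contDiffAt (hU.mem_nhds hz)).differentiableAt one_ne_zero
  -- fderiv of f in terms of gradient
  have hfderiv : ∀ z ∈ U, ∀ v, fderiv ℝ f z v = ⟪gradient f z, v⟫_ℝ := by
    intro z hz v
    rw [show fderiv ℝ f z = InnerProductSpace.toDual ℝ (EuclideanSpace ℝ (Fin n)) (gradient f z) from
      ((InnerProductSpace.toDual ℝ (EuclideanSpace ℝ (Fin n))).apply_symm_apply _).symm]
    exact InnerProductSpace.toDual_apply_apply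
  -- basic trajectory facts
  have hγU : ∀ x₀ ∈ U, ∀ t ≥ (0:ℝ), φ t x₀ ∈ U := fun x₀ hx₀ t ht => (hφ x₀ hx₀ t ht).1
  have hγd : ∀ x₀ ∈ U, ∀ t ≥ (0:ℝ),
      HasDerivAt (fun s => φ s x₀) (-(G (φ t x₀))) t := fun x₀ hx₀ t ht => by
    simpa using (hφ x₀ hx₀ t ht).2
  have hγc : ∀ x₀ ∈ U, ContinuousOn (fun t => φ t x₀) (Ici 0) := fun x₀ hx₀ t ht =>
    ((hγd x₀ hx₀ t ht).continuousAt).continuousWithinAt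
  -- conservation of h
  have hconsv : ∀ x₀ ∈ U, h x₀ = 0 → ∀ t ≥ (0:ℝ), h (φ t x₀) = 0 := by
    intro x₀ hx₀ hh0 t ht
    have hcont : ContinuousOn (fun s => h (φ s x₀)) (Icc 0 t) :=
      hh.continuous.comp_continuousOn ((hγc x₀ hx₀).mono Icc_subset_Ici_self)
    have hderiv : ∀ s ∈ Ico (0:ℝ) t, HasDerivWithinAt (fun s => h (φ s x₀)) 0 (Ici s) s := by
      intro s hs
      have hd := hγd x₀ hx₀ s hs.1
      have hfd : HasFDerivAt h (fderiv ℝ h (φ s x₀)) (φ s x₀) :=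
        ((hh.differentiable one_ne_zero) (φ s x₀)).hasFDerivAt
      have hcomp := hfd.comp_hasDerivAt s hd
      have hz : fderiv ℝ h (φ s x₀) (-(G (φ s x₀))) = 0 := by
        have hker : G (φ s x₀) ∈ LinearMap.ker (fderiv ℝ h (φ s x₀) : EuclideanSpace ℝ (Fin n) →ₗ[ℝ] EuclideanSpace ℝ (Fin m)) :=
          my_mem _ _ (hP1 (φ s x₀)) (hP2 (φ s x₀)) _
        rw [map_neg, show fderiv ℝ h (φ s x₀) (G (φ s x₀)) = 0 from LinearMap.mem_ker.mp hker, neg_zero]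
      rw [hz] at hcomp
      exact hcomp.hasDerivWithinAt
    have := constant_of_has_deriv_right_zero hcont hderiv t ⟨ht, le_rfl⟩
    rw [this, hφ0 x₀ hx₀, hh0]
  -- derivative of f along trajectory
  have hgd : ∀ x₀ ∈ U, ∀ t ≥ (0:ℝ),
      HasDerivAt (fun s => f (φ s x₀)) (-‖G (φ t x₀)‖ ^ 2) t := by
    intro x₀ hx₀ t ht
    have hd := hγd x₀ hx₀ t ht
    have hyU := hγU x₀ hx₀ t ht
    have hfd : HasFDerivAt f (fderiv ℝ f (φ t x₀)) (φ t x₀) := (hdiff _ hyU).hasFDerivAt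
    have hcomp := hfd.comp_hasDerivAt t hd
    have hval : fderiv ℝ f (φ t x₀) (-(G (φ t x₀))) = -‖G (φ t x₀)‖ ^ 2 := by
      rw [map_neg, hfderiv _ hyU, hGdef]
      rw [my_inner_proj (LinearMap.ker (fderiv ℝ h (φ t x₀) : EuclideanSpace ℝ (Fin n) →ₗ[ℝ] EuclideanSpace ℝ (Fin m))) _
        (hP1 (φ t x₀)) (hP2 (φ t x₀))]
    rw [hval] at hcomp
    exact hcomp
  -- f decreasing along trajectory
  have hgmono : ∀ x₀ ∈ U, AntitoneOn (fun s => f (φ s x₀)) (Ici 0) := by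
    intro x₀ hx₀
    apply antitoneOn_of_deriv_nonpos (convex_Ici 0)
    · exact hf.continuousOn.comp (hγc x₀ hx₀) (fun t ht => hγU x₀ hx₀ t ht)
    · intro t ht
      rw [interior_Ici] at ht
      exact (hgd x₀ hx₀ t (le_of_lt ht)).differentiableAt.differentiableWithinAt
    · intro t ht
      rw [interior_Ici] at ht
      rw [(hgd x₀ hx₀ t (le_of_lt ht)).deriv]
      exact neg_nonpos.mpr (sq_nonneg _)
  -- choose a radius
  have hVV2 : V ∩ V₂ ∈ nhds xstar := Filter.inter_mem (hVopen.mem_nhds hxV) (hV2open.mem_nhds hxV2)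
  obtain ⟨r, hr0, hrsub⟩ := Metric.nhds_basis_closedBall.mem_iff.mp hVV2
  have hKU : closedBall xstar r ⊆ U := fun z hz => hVU (hrsub hz).1
  have hKV2 : closedBall xstar r ⊆ V₂ := fun z hz => (hrsub hz).2
  have hKc : IsCompact (closedBall xstar r) := isCompact_closedBall xstar r
  -- the master convergence argument
  have hmaster : ∀ V' : Set (EuclideanSpace ℝ (Fin n)), V' ⊆ U →
      (∀ x₀ ∈ V', h x₀ = 0 → ∀ t ≥ (0:ℝ), φ t x₀ ∈ closedBall xstar r) →
      ∀ x₀ ∈ V', h x₀ = 0 →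
        Filter.Tendsto (fun t => φ t x₀) Filter.atTop (nhds xstar) := by
    intro V' hV'U hstay x₀ hx₀ hh0
    have hx₀U : x₀ ∈ U := hV'U hx₀
    set γ : ℝ → EuclideanSpace ℝ (Fin n) := fun t => φ t x₀ with hγdef
    have hstay' : ∀ t ≥ (0:ℝ), γ t ∈ closedBall xstar r := hstay x₀ hx₀ hh0
    by_contra hcon
    rw [Metric.tendsto_nhds] at hcon
    push_neg at hcon
    obtain ⟨ε, hε, hfreq⟩ := hcon
    have hfreq' : ∀ a : ℝ, ∃ t ≥ a, ε ≤ dist (γ t) xstar := by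
      intro a
      obtain ⟨t, hta, htd⟩ := Filter.frequently_atTop.mp hfreq a
      exact ⟨t, hta, htd⟩
    -- a sequence of times escaping to infinity staying ε-away
    have hu : ∀ k : ℕ, ∃ t : ℝ, t ≥ k ∧ ε ≤ dist (γ t) xstar := by
      intro k; obtain ⟨t, h1, h2⟩ := hfreq' k; exact ⟨t, h1, h2⟩
    choose u hu1 hu2 using hu
    have hu0 : ∀ k, (0:ℝ) ≤ u k := fun k => le_trans (Nat.cast_nonneg k) (hu1 k)
    have humem : ∀ k, γ (u k) ∈ closedBall xstar r := fun k => hstay' (u k) (hu0 k)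
    obtain ⟨y, hyK, σ, hσmono, htend⟩ := hKc.tendsto_subseq humem
    have hyU : y ∈ U := hKU hyK
    -- h y = 0
    have hhy : h y = 0 := by
      have h1 : Filter.Tendsto (fun k => h (γ (u (σ k)))) Filter.atTop (nhds (h y)) :=
        (hh.continuous.tendsto y).comp htend
      have h2 : (fun k => h (γ (u (σ k)))) = fun _ => 0 := by
        funext k; exact hconsv x₀ hx₀U hh0 (u (σ k)) (hu0 (σ k))
      rw [h2] at h1
      exact (tendsto_nhds_unique tendsto_const_nhds h1).symm
    -- y is not xstar
    have hyne : y ≠ xstar := by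
      have h1 : Filter.Tendsto (fun k => dist (((fun j => γ (u j)) ∘ σ) k) xstar)
          Filter.atTop (nhds (dist y xstar)) := htend.dist tendsto_const_nhds
      have h2 : ε ≤ dist y xstar := ge_of_tendsto' h1 (fun k => hu2 (σ k))
      intro heq
      rw [heq, dist_self] at h2
      linarith
    -- hence G y ≠ 0
    have hGy : G y ≠ 0 := by
      intro h0
      have : gradient f y ∈ (LinearMap.ker (fderiv ℝ h y : EuclideanSpace ℝ (Fin n) →ₗ[ℝ] EuclideanSpace ℝ (Fin m)))ᗮ :=
        (my_zero_iff (LinearMap.ker (fderiv ℝ h y : EuclideanSpace ℝ (Fin n) →ₗ[ℝ] EuclideanSpace ℝ (Fin m))) (P y) (hP1 y) (hP2 y)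
          (gradient f y)).mp h0
      exact hyne (hV2iso y (hKV2 hyK) hhy this)
    have hδ : 0 < ‖G y‖ := norm_pos_iff.mpr hGy
    set δ := ‖G y‖ with hδdef
    -- a ball around y where the descent rate is at least (δ/2)^2
    have hGcy : ContinuousAt (fun z => ‖G z‖) y :=
      ((hG.continuousAt (hU.mem_nhds hyU)).norm)
    have hev : ∀ᶠ z in nhds y, δ / 2 < ‖G z‖ :=
      hGcy.eventually (eventually_gt_nhds (by linarith))
    obtain ⟨ρ, hρ0, hρ⟩ := Metric.eventually_nhds_iff.mp hev
    -- bound on the speed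
    obtain ⟨M, hM⟩ := hKc.exists_bound_of_continuousOn (hgradcont.mono hKU)
    set M₀ : ℝ := max M 1 with hM₀def
    have hM₀ : 0 < M₀ := lt_of_lt_of_le one_pos (le_max_right M 1)
    have hspeed : ∀ t ≥ (0:ℝ), ‖G (γ t)‖ ≤ M₀ := by
      intro t ht
      have h1 : ‖G (γ t)‖ ≤ ‖gradient f (γ t)‖ :=
        my_norm_le (LinearMap.ker (fderiv ℝ h (γ t) : EuclideanSpace ℝ (Fin n) →ₗ[ℝ] EuclideanSpace ℝ (Fin m))) (P (γ t)) (hP1 (γ t)) (hP2 (γ t)) _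
      exact h1.trans ((hM (γ t) (hstay' t ht)).trans (le_max_left M 1))
    set τ : ℝ := ρ / (2 * M₀) with hτdef
    have hτ0 : 0 < τ := div_pos hρ0 (by linarith)
    -- lower bound on f over the closed ball
    obtain ⟨zmin, hzminK, hzmin⟩ := hKc.exists_isMinOn ⟨xstar, mem_closedBall_self hr0.le⟩
      (hf.continuousOn.mono hKU)
    -- the drop lemma
    have hdrop : ∀ s ≥ (0:ℝ), dist (γ s) y < ρ / 2 →
        f (γ (s + τ)) ≤ f (γ s) - (δ / 2) ^ 2 * τ := by
      intro s hs hclose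
      have hIsub : Icc s (s + τ) ⊆ Ici (0:ℝ) := fun w hw => le_trans hs hw.1
      have hder : ∀ w ∈ Icc s (s + τ), HasDerivWithinAt γ (-(G (γ w))) (Icc s (s + τ)) w :=
        fun w hw => ((hγd x₀ hx₀U w (hIsub hw)).hasDerivWithinAt)
      have hbnd : ∀ w ∈ Icc s (s + τ), ‖-(G (γ w))‖ ≤ M₀ := by
        intro w hw; rw [norm_neg]; exact hspeed w (hIsub hw)
      have hlip : ∀ w ∈ Icc s (s + τ), dist (γ w) (γ s) ≤ M₀ * (w - s) := by
        intro w hw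
        have := (convex_Icc s (s + τ)).norm_image_sub_le_of_norm_hasDerivWithin_le
          hder hbnd (left_mem_Icc.mpr (by linarith)) hw
        rw [dist_eq_norm]
        calc ‖γ w - γ s‖ ≤ M₀ * ‖w - s‖ := this
          _ = M₀ * (w - s) := by rw [Real.norm_eq_abs, abs_of_nonneg (by linarith [hw.1])]
      have hball : ∀ w ∈ Icc s (s + τ), δ / 2 < ‖G (γ w)‖ := by
        intro w hw
        apply hρ
        calc dist (γ w) y ≤ dist (γ w) (γ s) + dist (γ s) y := dist_triangle _ _ _
          _ ≤ M₀ * (w - s) + dist (γ s) y := by linarith [hlip w hw]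
          _ < M₀ * τ + ρ / 2 := by
              have h1 : w - s ≤ τ := by linarith [hw.2]
              have h2 : M₀ * (w - s) ≤ M₀ * τ := by nlinarith
              linarith
          _ ≤ ρ / 2 + ρ / 2 := by
              have : M₀ * τ = ρ / 2 := by rw [hτdef]; field_simp
              linarith
          _ = ρ := by ring
      -- the auxiliary function F
      have hFanti : AntitoneOn (fun w => f (γ w) + (δ / 2) ^ 2 * w) (Icc s (s + τ)) := by
        apply antitoneOn_of_deriv_nonpos (convex_Icc s (s + τ))
        · exact ((hf.continuousOn.comp ((hγc x₀ hx₀U).mono hIsub)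
            (fun w hw => hγU x₀ hx₀U w (hIsub hw))).add
            (continuous_const.mul continuous_id).continuousOn)
        · intro w hw
          rw [interior_Icc] at hw
          have hlin : HasDerivAt (fun x : ℝ => (δ / 2) ^ 2 * x) ((δ / 2) ^ 2) w := by
            simpa using (hasDerivAt_id w).const_mul ((δ / 2) ^ 2)
          have hD := (hgd x₀ hx₀U w (hIsub (Ioo_subset_Icc_self hw))).add hlin
          exact hD.differentiableAt.differentiableWithinAt
        · intro w hw
          rw [interior_Icc] at hw
          have hlin : HasDerivAt (fun x : ℝ => (δ / 2) ^ 2 * x) ((δ / 2) ^ 2) w := by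
            simpa using (hasDerivAt_id w).const_mul ((δ / 2) ^ 2)
          have hD := (hgd x₀ hx₀U w (hIsub (Ioo_subset_Icc_self hw))).add hlin
          have hEq : deriv (fun w => f (γ w) + (δ / 2) ^ 2 * w) w
              = -‖G (γ w)‖ ^ 2 + (δ / 2) ^ 2 := hD.deriv
          rw [hEq]
          have h1 := hball w (Ioo_subset_Icc_self hw)
          have h2 : (δ / 2) ^ 2 ≤ ‖G (γ w)‖ ^ 2 := by nlinarith [norm_nonneg (G (γ w))]
          linarith
      have := hFanti (left_mem_Icc.mpr (by linarith)) (right_mem_Icc.mpr (by linarith))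
        (by linarith)
      simp only at this
      nlinarith
    -- infinitely many visits near y
    have hvis : ∀ T : ℝ, ∃ s, s ≥ T ∧ s ≥ 0 ∧ dist (γ s) y < ρ / 2 := by
      intro T
      have hev2 : ∀ᶠ k in Filter.atTop, dist (γ (u (σ k))) y < ρ / 2 := by
        have := htend (Metric.ball_mem_nhds y (show (0:ℝ) < ρ / 2 by linarith))
        rw [Filter.mem_map] at this
        filter_upwards [this] with k hk
        exact Metric.mem_ball.mp hk
      obtain ⟨N, hN⟩ := exists_nat_ge T
      obtain ⟨k, hk1, hk2⟩ := (hev2.and (Filter.eventually_ge_atTop N)).exists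
      refine ⟨u (σ k), ?_, hu0 (σ k), hk1⟩
      calc T ≤ (N:ℝ) := hN
        _ ≤ (k:ℝ) := Nat.cast_le.mpr hk2
        _ ≤ (σ k : ℝ) := Nat.cast_le.mpr (hσmono.le_apply)
        _ ≤ u (σ k) := hu1 (σ k)
    choose sfun hsge hs0 hsdist using hvis
    set a : ℕ → ℝ := fun k => Nat.rec (sfun 0) (fun _ prev => sfun (prev + τ)) k with hadef
    have ha0 : ∀ k, 0 ≤ a k := by
      intro k; cases k with
      | zero => exact hs0 0
      | succ k => exact hs0 _
    have hadist : ∀ k, dist (γ (a k)) y < ρ / 2 := by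
      intro k; cases k with
      | zero => exact hsdist 0
      | succ k => exact hsdist _
    have hastep : ∀ k, a k + τ ≤ a (k + 1) := fun k => hsge (a k + τ)
    -- inductive decrease
    have hdec : ∀ k : ℕ, f (γ (a k)) ≤ f (γ (a 0)) - k * ((δ / 2) ^ 2 * τ) := by
      intro k
      induction k with
      | zero => simp
      | succ k ih =>
        have h1 : f (γ (a (k + 1))) ≤ f (γ (a k + τ)) := by
          apply hgmono x₀ hx₀U
          · exact mem_Ici.mpr (by linarith [ha0 k, hτ0.le])
          · exact mem_Ici.mpr (ha0 (k + 1))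
          · exact hastep k
        have h2 := hdrop (a k) (ha0 k) (hadist k)
        push_cast
        nlinarith
    -- contradiction with the lower bound
    have hlb : ∀ k : ℕ, f zmin ≤ f (γ (a k)) := fun k => hzmin (hstay' (a k) (ha0 k))
    obtain ⟨k, hk⟩ := exists_nat_gt ((f (γ (a 0)) - f zmin) / ((δ / 2) ^ 2 * τ))
    have hpos : 0 < (δ / 2) ^ 2 * τ := by positivity
    have h3 := hdec k
    have h4 := hlb k
    rw [div_lt_iff₀ hpos] at hk
    linarith
  -- the escape-to-sphere argument, shared by both cases
  have hescape : ∀ W : Set (EuclideanSpace ℝ (Fin n)), W ⊆ Metric.ball xstar r →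
      ∀ x₁ ∈ W, h x₁ = 0 → ∀ t ≥ (0:ℝ), φ t x₁ ∉ closedBall xstar r →
      ∃ s, 0 ≤ s ∧ s ≤ t ∧ φ s x₁ ∈ Metric.sphere xstar r ∩ {x | h x = 0} ∧
        f (φ s x₁) ≤ f x₁ := by
    intro W hWball x₁ hx₁ hh1 t ht hout
    have hx₁U : x₁ ∈ U := hKU (Metric.ball_subset_closedBall (hWball hx₁))
    have hρc : ContinuousOn (fun s => dist (φ s x₁) xstar) (Icc 0 t) :=
      Continuous.comp_continuousOn (continuous_id.dist continuous_const) ((hγc x₁ hx₁U).mono Icc_subset_Ici_self)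
    have h0lt : dist (φ 0 x₁) xstar < r := by
      rw [hφ0 x₁ hx₁U]; exact Metric.mem_ball.mp (hWball hx₁)
    have htgt : r ≤ dist (φ t x₁) xstar := by
      by_contra hlt
      push_neg at hlt
      exact hout (Metric.mem_closedBall.mpr hlt.le)
    have hmem : r ∈ Icc (dist (φ 0 x₁) xstar) (dist (φ t x₁) xstar) := ⟨h0lt.le, htgt⟩
    obtain ⟨s, hsI, hs⟩ := intermediate_value_Icc ht hρc hmem
    refine ⟨s, hsI.1, hsI.2, ⟨Metric.mem_sphere.mpr hs, hconsv x₁ hx₁U hh1 s hsI.1⟩, ?_⟩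
    have h2 : f (φ s x₁) ≤ f (φ 0 x₁) :=
      hgmono x₁ hx₁U (mem_Ici.mpr le_rfl) (mem_Ici.mpr hsI.1) hsI.1
    rw [hφ0 x₁ hx₁U] at h2
    exact h2
  by_cases hS : (Metric.sphere xstar r ∩ {x | h x = 0}).Nonempty
  · -- the sphere meets the constraint set: use a sublevel set
    have hSc : IsCompact (Metric.sphere xstar r ∩ {x | h x = 0}) :=
      (isCompact_sphere xstar r).inter_right (isClosed_eq hh.continuous continuous_const)
    have hSU : Metric.sphere xstar r ∩ {x | h x = 0} ⊆ U :=
      fun z hz => hKU (Metric.sphere_subset_closedBall hz.1)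
    obtain ⟨y₀, hy₀S, hy₀min⟩ := hSc.exists_isMinOn hS (hf.continuousOn.mono hSU)
    have hy₀V : y₀ ∈ V := (hrsub (Metric.sphere_subset_closedBall hy₀S.1)).1
    have hy₀ne : y₀ ≠ xstar := by
      intro heq
      have hd := hy₀S.1
      rw [Metric.mem_sphere, heq, dist_self] at hd
      linarith
    have hc : f xstar < f y₀ := hVmin y₀ hy₀V hy₀S.2 hy₀ne
    set W : Set (EuclideanSpace ℝ (Fin n)) := Metric.ball xstar r ∩ f ⁻¹' (Iio (f y₀))
      with hWdef
    have hWball : W ⊆ Metric.ball xstar r := fun z hz => hz.1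
    have hWU : W ⊆ U := fun z hz => hKU (Metric.ball_subset_closedBall hz.1)
    refine ⟨W, ?_, ⟨Metric.mem_ball_self hr0, hc⟩, ?_⟩
    · exact ContinuousOn.isOpen_inter_preimage
        (hf.continuousOn.mono (fun z hz => hKU (Metric.ball_subset_closedBall hz)))
        Metric.isOpen_ball isOpen_Iio
    · intro x₀ hx₀ hh0
      apply hmaster W hWU ?_ x₀ hx₀ hh0
      intro x₁ hx₁ hh1 t ht
      by_contra hout
      obtain ⟨s, hs0, hst, hsS, hsf⟩ := hescape W hWball x₁ hx₁ hh1 t ht hout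
      have h1 : f y₀ ≤ f (φ s x₁) := hy₀min hsS
      have h3 : f x₁ < f y₀ := hx₁.2
      linarith
  · -- the sphere misses the constraint set: the ball works directly
    refine ⟨Metric.ball xstar r, Metric.isOpen_ball, Metric.mem_ball_self hr0, ?_⟩
    intro x₀ hx₀ hh0
    have hsub : Metric.ball xstar r ⊆ U := fun z hz => hKU (Metric.ball_subset_closedBall hz)
    apply hmaster _ hsub ?_ x₀ hx₀ hh0
    intro x₁ hx₁ hh1 t ht
    by_contra hout
    obtain ⟨s, hs0, hst, hsS, hsf⟩ :=
      hescape (Metric.ball xstar r) (fun z hz => hz) x₁ hx₁ hh1 t ht hout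
    exact hS ⟨φ s x₁, hsS⟩
end

section
/- Let f be C¹ and coercive on ℝⁿ and let x : [0,∞) → ℝⁿ solve ẋ = −P(x)∇f(x) with P(x) the orthogonal projection onto ker J(x) (J a continuous full-row-rank matrix field), with h(x(0)) = 0 where J is the Jacobian of the C¹ map h. Then the trajectory x([0,∞)) is contained in the compact set {y : f(y) ≤ f(x(0)), h(y) = 0}; in particular the trajectory is bounded. -/
open Filter Set RealInnerProductSpace

/-- for the projected gradient flow `ẋ = −P(x)∇f(x)` with `f` C¹
and coercive, `P(y)` the orthogonal projection onto `ker Dh(y)` for a C¹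
full-row-rank `h`, and `h(x 0) = 0`, the trajectory stays in the compact
constrained sublevel set `{y | f y ≤ f (x 0) ∧ h y = 0}`; in particular it is
bounded. -/
theorem stmt19 (n m : ℕ)
    (f : EuclideanSpace ℝ (Fin n) → ℝ) (hf : ContDiff ℝ 1 f)
    (hcoer : Filter.Tendsto f (Filter.cocompact (EuclideanSpace ℝ (Fin n))) Filter.atTop)
    (h : EuclideanSpace ℝ (Fin n) → EuclideanSpace ℝ (Fin m)) (hh : ContDiff ℝ 1 h)
    (hsurj : ∀ y, Function.Surjective (fderiv ℝ h y))
    (P : EuclideanSpace ℝ (Fin n) →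
      EuclideanSpace ℝ (Fin n) →L[ℝ] EuclideanSpace ℝ (Fin n))
    (hP1 : ∀ y, ∀ v ∈ LinearMap.ker (fderiv ℝ h y : EuclideanSpace ℝ (Fin n) →ₗ[ℝ] EuclideanSpace ℝ (Fin m)), P y v = v)
    (hP2 : ∀ y, ∀ v ∈ (LinearMap.ker (fderiv ℝ h y : EuclideanSpace ℝ (Fin n) →ₗ[ℝ] EuclideanSpace ℝ (Fin m)))ᗮ, P y v = 0)
    (x : ℝ → EuclideanSpace ℝ (Fin n))
    (hx : ∀ t ≥ (0:ℝ), HasDerivAt x (-(P (x t)) (gradient f (x t))) t)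
    (hinit : h (x 0) = 0) :
    IsCompact {y | f y ≤ f (x 0) ∧ h y = 0} ∧
      ∀ t ≥ (0:ℝ), x t ∈ {y | f y ≤ f (x 0) ∧ h y = 0} := by
  have hfc : Continuous f := hf.continuous
  have hhc : Continuous h := hh.continuous
  -- the set is closed
  have hclosed : IsClosed {y | f y ≤ f (x 0) ∧ h y = 0} := by
    have : {y | f y ≤ f (x 0) ∧ h y = 0}
        = {y | f y ≤ f (x 0)} ∩ {y | h y = 0} := rfl
    rw [this]
    exact (isClosed_le hfc continuous_const).inter (isClosed_eq hhc continuous_const)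
  -- compactness
  have hcpt : IsCompact {y | f y ≤ f (x 0) ∧ h y = 0} := by
    have hev : ∀ᶠ y in cocompact (EuclideanSpace ℝ (Fin n)), f (x 0) < f y :=
      hcoer.eventually (eventually_gt_atTop (f (x 0)))
    rcases mem_cocompact.mp hev with ⟨K, hK, hKsub⟩
    refine hK.of_isClosed_subset hclosed ?_
    intro y hy
    by_contra hyK
    exact absurd hy.1 (not_le.mpr (hKsub hyK))
  refine ⟨hcpt, ?_⟩
  -- basic facts about P
  have key : ∀ y v, (P y v ∈ LinearMap.ker (fderiv ℝ h y : EuclideanSpace ℝ (Fin n) →ₗ[ℝ] EuclideanSpace ℝ (Fin m))) ∧ (0 : ℝ) ≤ ⟪v, P y v⟫ := by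
    intro y v
    set K := LinearMap.ker (fderiv ℝ h y : EuclideanSpace ℝ (Fin n) →ₗ[ℝ] EuclideanSpace ℝ (Fin m)) with hKdef
    set p : EuclideanSpace ℝ (Fin n) := (K.orthogonalProjection v : EuclideanSpace ℝ (Fin n))
      with hpdef
    have hp : p ∈ K := (K.orthogonalProjection v).2
    have hw : v - p ∈ Kᗮ := by
      have := K.sub_starProjection_mem_orthogonal v; exact this
    have hPv : P y v = p := by
      have h1 := hP1 y p hp
      have h2 := hP2 y (v - p) hw
      have h3 : P y v = P y p + P y (v - p) := by
        rw [← map_add]; congr 1; abel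
      rw [h3, h1, h2, add_zero]
    refine ⟨hPv ▸ hp, ?_⟩
    rw [hPv]
    have hv : v = p + (v - p) := by abel
    have : ⟪v, p⟫ = ⟪p, p⟫ + ⟪v - p, p⟫ := by
      conv_lhs => rw [hv]
      rw [inner_add_left]
    have h0 : ⟪v - p, p⟫ = (0:ℝ) := by rw [real_inner_comm]; exact hw p hp
    rw [this, h0, add_zero]
    exact real_inner_self_nonneg
  -- h is constant along the trajectory
  have hxdiff : ∀ t ≥ (0:ℝ), DifferentiableAt ℝ x t := fun t ht => (hx t ht).differentiableAt
  have hderivh : ∀ t ≥ (0:ℝ), HasDerivAt (fun s => h (x s)) 0 t := by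
    intro t ht
    have hD := ((hh.differentiable one_ne_zero) (x t)).hasFDerivAt
    have := hD.comp_hasDerivAt t (hx t ht)
    refine this.congr_deriv ?_
    have hk := (key (x t) (gradient f (x t))).1
    rw [LinearMap.mem_ker] at hk
    simp
    exact hk
  have hconsth : ∀ t ≥ (0:ℝ), h (x t) = h (x 0) := by
    intro t ht
    rcases eq_or_lt_of_le ht with rfl | ht'
    · rfl
    have hcont : ContinuousOn (fun s => h (x s)) (Icc 0 t) := by
      intro s hs
      exact ((hderivh s hs.1).continuousAt).continuousWithinAt
    have := constant_of_has_deriv_right_zero hcont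
      (fun s hs => ((hderivh s hs.1).hasDerivWithinAt)) t (right_mem_Icc.mpr ht)
    exact this
  -- f is nonincreasing along the trajectory
  have hderivf : ∀ t ≥ (0:ℝ), HasDerivAt (fun s => f (x s))
      (⟪gradient f (x t), -(P (x t)) (gradient f (x t))⟫) t := by
    intro t ht
    have hg : HasGradientAt f (gradient f (x t)) (x t) :=
      ((hf.differentiable one_ne_zero) (x t)).hasGradientAt
    have hD := hg.hasFDerivAt
    have := hD.comp_hasDerivAt t (hx t ht)
    exact this.congr_deriv (by simp)
  have hfmono : AntitoneOn (fun s => f (x s)) (Ici 0) := by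
    apply antitoneOn_of_deriv_nonpos (convex_Ici 0)
    · intro s hs
      exact ((hderivf s hs).continuousAt).continuousWithinAt
    · intro s hs
      rw [interior_Ici] at hs
      exact (hderivf s (le_of_lt hs)).differentiableAt.differentiableWithinAt
    · intro s hs
      rw [interior_Ici] at hs
      rw [(hderivf s (le_of_lt hs)).deriv]
      have := (key (x s) (gradient f (x s))).2
      rw [inner_neg_right]
      linarith
  intro t ht
  exact ⟨hfmono (self_mem_Ici) ht ht, (hconsth t ht).trans hinit⟩
end
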